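/- arXiv:2103.16878 — 3 statements merged into one kernel-verified Lean document; each statement's English description precedes it below -/
import Mathlib

section
/- Let n ≥ 1, let Λ = diag(λ₁,…,λₙ) be a diagonal complex n×n matrix with pairwise distinct diagonal entries, let D be a diagonal complex n×n matrix, let R be a complex n×n matrix with zero diagonal entries, and set A'' = ΛR − RΛ. Then there exists a unique sequence (P_j)_{j≥0} of complex n×n matrices with P₀ = Iₙ satisfying, for every j ≥ 0, the recursion ΛP_{j+1} − P_{j+1}Λ = jP_j + A''P_j + (DP_j − P_jD). Moreover, for this sequence the off-diagonal part of P₁ equals R, and for every j ≥ 0 the diagonal part of P_{j+1} equals −1/(j+1) times the diagonal part of A''·(P_{j+1} − diag(P_{j+1})). -/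
open Matrix

/-- The diagonal part of a square matrix: the diagonal matrix with the same diagonal. -/
noncomputable def diagPart {n : ℕ} (M : Matrix (Fin n) (Fin n) ℂ) :
    Matrix (Fin n) (Fin n) ℂ :=
  Matrix.diagonal (fun i => M i i)

section Aux

variable {n : ℕ}

/-- Right-hand side of the recursion. -/
noncomputable def Qexpr (lam d : Fin n → ℂ) (A : Matrix (Fin n) (Fin n) ℂ) (j : ℕ) (P : Matrix (Fin n) (Fin n) ℂ) : Matrix (Fin n) (Fin n) ℂ :=
  (j : ℂ) • P + A * P + (Matrix.diagonal d * P - P * Matrix.diagonal d)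

/-- Off-diagonal part of the next term. -/
noncomputable def Omat (lam d : Fin n → ℂ) (A : Matrix (Fin n) (Fin n) ℂ) (j : ℕ) (P : Matrix (Fin n) (Fin n) ℂ) : Matrix (Fin n) (Fin n) ℂ :=
  Matrix.of fun i k => if i = k then 0 else Qexpr lam d A j P i k / (lam i - lam k)

noncomputable def nextP (lam d : Fin n → ℂ) (A : Matrix (Fin n) (Fin n) ℂ) (j : ℕ) (P : Matrix (Fin n) (Fin n) ℂ) : Matrix (Fin n) (Fin n) ℂ :=
  Omat lam d A j P +
    Matrix.diagonal (fun i => (-1 / ((j : ℂ) + 1)) * (A * Omat lam d A j P) i i)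

noncomputable def seqP (lam d : Fin n → ℂ) (A : Matrix (Fin n) (Fin n) ℂ) : ℕ → Matrix (Fin n) (Fin n) ℂ
  | 0 => 1
  | j + 1 => nextP lam d A j (seqP lam d A j)

lemma Omat_diag (lam d : Fin n → ℂ) (A : Matrix (Fin n) (Fin n) ℂ) (j : ℕ) (P : Matrix (Fin n) (Fin n) ℂ) (i : Fin n) :
    Omat lam d A j P i i = 0 := by simp [Omat]

lemma mul_Omat_diag (lam d : Fin n → ℂ) (A : Matrix (Fin n) (Fin n) ℂ)
    (hAd : ∀ i, A i i = 0) (j : ℕ) (P : Matrix (Fin n) (Fin n) ℂ) (i : Fin n) :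
    (A * nextP lam d A j P) i i = (A * Omat lam d A j P) i i := by
  rw [nextP, Matrix.mul_add, Matrix.add_apply]
  simp [Matrix.mul_diagonal, hAd i]

lemma diagQ (lam d : Fin n → ℂ) (A : Matrix (Fin n) (Fin n) ℂ) (hAd : ∀ i, A i i = 0) (j : ℕ) (i : Fin n) :
    Qexpr lam d A j (seqP lam d A j) i i = 0 := by
  cases j with
  | zero =>
    simp [Qexpr, seqP, Matrix.add_apply, Matrix.sub_apply, Matrix.smul_apply,
      Matrix.diagonal_mul, Matrix.mul_diagonal, hAd i]
  | succ j =>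
    have hOd := Omat_diag lam d A j (seqP lam d A j) i
    have hm := mul_Omat_diag lam d A hAd j (seqP lam d A j) i
    have hj1 : ((j : ℂ) + 1) ≠ 0 := Nat.cast_add_one_ne_zero j
    have hNd : nextP lam d A j (seqP lam d A j) i i
        = (-1 / ((j : ℂ) + 1)) * (A * Omat lam d A j (seqP lam d A j)) i i := by
      rw [nextP, Matrix.add_apply, hOd, zero_add, Matrix.diagonal_apply_eq]
    rw [show seqP lam d A (j + 1) = nextP lam d A j (seqP lam d A j) from rfl]
    simp only [Qexpr, Matrix.add_apply, Matrix.sub_apply, Matrix.smul_apply,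
      Matrix.diagonal_mul, Matrix.mul_diagonal, smul_eq_mul]
    rw [hm, hNd]
    push_cast
    field_simp
    ring

lemma seqP_rec (lam d : Fin n → ℂ) (A : Matrix (Fin n) (Fin n) ℂ) (hlam : Function.Injective lam) (hAd : ∀ i, A i i = 0) (j : ℕ) :
    Matrix.diagonal lam * seqP lam d A (j + 1) - seqP lam d A (j + 1) * Matrix.diagonal lam =
      Qexpr lam d A j (seqP lam d A j) := by
  ext i k
  rw [show seqP lam d A (j + 1) = nextP lam d A j (seqP lam d A j) from rfl]
  rw [Matrix.sub_apply, Matrix.diagonal_mul, Matrix.mul_diagonal]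
  by_cases hik : i = k
  · subst hik
    have h0 : lam i * nextP lam d A j (seqP lam d A j) i i
        - nextP lam d A j (seqP lam d A j) i i * lam i = 0 := by ring
    rw [h0, diagQ lam d A hAd j i]
  · have hNik : nextP lam d A j (seqP lam d A j) i k
        = Qexpr lam d A j (seqP lam d A j) i k / (lam i - lam k) := by
      rw [nextP, Matrix.add_apply, Matrix.diagonal_apply_ne _ hik, add_zero]
      simp [Omat, hik]
    rw [hNik]
    have hlk : lam i - lam k ≠ 0 := sub_ne_zero.mpr fun hh => hik (hlam hh)
    field_simp

/-- From a solution, the diagonal compatibility relation. -/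
lemma sol_diag (lam d : Fin n → ℂ) (A : Matrix (Fin n) (Fin n) ℂ) (P : ℕ → Matrix (Fin n) (Fin n) ℂ)
    (hrec : ∀ j : ℕ, Matrix.diagonal lam * P (j + 1) - P (j + 1) * Matrix.diagonal lam =
      Qexpr lam d A j (P j)) (j : ℕ) (i : Fin n) :
    ((j : ℂ) + 1) * P (j + 1) i i + (A * P (j + 1)) i i = 0 := by
  have h := congrFun (congrFun (hrec (j + 1)) i) i
  simp only [Qexpr, Matrix.sub_apply, Matrix.add_apply, Matrix.smul_apply,
    Matrix.diagonal_mul, Matrix.mul_diagonal, smul_eq_mul] at h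
  push_cast at h
  linear_combination -h

lemma uniq (lam d : Fin n → ℂ) (A : Matrix (Fin n) (Fin n) ℂ) (hlam : Function.Injective lam) (hAd : ∀ i, A i i = 0)
    (P Q : ℕ → Matrix (Fin n) (Fin n) ℂ) (hP0 : P 0 = 1) (hQ0 : Q 0 = 1)
    (hPrec : ∀ j : ℕ, Matrix.diagonal lam * P (j + 1) - P (j + 1) * Matrix.diagonal lam =
      Qexpr lam d A j (P j))
    (hQrec : ∀ j : ℕ, Matrix.diagonal lam * Q (j + 1) - Q (j + 1) * Matrix.diagonal lam =
      Qexpr lam d A j (Q j)) : P = Q := by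
  funext j
  induction j with
  | zero => rw [hP0, hQ0]
  | succ j ih =>
    have hoff : ∀ i k, i ≠ k → P (j + 1) i k = Q (j + 1) i k := by
      intro i k hik
      have h1 := congrFun (congrFun (hPrec j) i) k
      have h2 := congrFun (congrFun (hQrec j) i) k
      rw [ih] at h1
      simp only [Matrix.sub_apply, Matrix.diagonal_mul, Matrix.mul_diagonal] at h1 h2
      have hlk : lam i - lam k ≠ 0 := sub_ne_zero.mpr fun hh => hik (hlam hh)
      have hc : (lam i - lam k) * P (j + 1) i k = (lam i - lam k) * Q (j + 1) i k := by
        linear_combination h1 - h2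
      exact mul_left_cancel₀ hlk hc
    ext i k
    by_cases hik : i = k
    · subst hik
      have hAP : (A * P (j + 1)) i i = (A * Q (j + 1)) i i := by
        rw [Matrix.mul_apply, Matrix.mul_apply]
        refine Finset.sum_congr rfl fun x _ => ?_
        by_cases hxi : x = i
        · subst hxi; rw [hAd]; ring
        · rw [hoff x i hxi]
      have h1 := sol_diag lam d A P hPrec j i
      have h2 := sol_diag lam d A Q hQrec j i
      have hj1 : ((j : ℂ) + 1) ≠ 0 := Nat.cast_add_one_ne_zero j
      have hc : ((j : ℂ) + 1) * P (j + 1) i i = ((j : ℂ) + 1) * Q (j + 1) i i := by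
        linear_combination h1 - h2 - hAP
      exact mul_left_cancel₀ hj1 hc
    · exact hoff i k hik

end Aux

/-- The recursion `[Λ, P (j+1)] = j • P j + A'' * P j + [D, P j]`, with `Λ` diagonal with
pairwise distinct entries, `D` diagonal, `R` of zero diagonal and `A'' = [Λ, R]`, has a
unique solution `(P j)` with `P 0 = 1`; moreover the off-diagonal part of `P 1` is `R`
and the diagonal part of `P (j+1)` is `-1/(j+1)` times the diagonal part of
`A'' * (offdiagonal part of P (j+1))`. -/
theorem stmt3 (n : ℕ) (hn : 1 ≤ n) (lam : Fin n → ℂ) (hlam : Function.Injective lam)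
    (d : Fin n → ℂ) (R : Matrix (Fin n) (Fin n) ℂ) (hR : ∀ i, R i i = 0)
    (Λ D A'' : Matrix (Fin n) (Fin n) ℂ)
    (hΛ : Λ = Matrix.diagonal lam) (hD : D = Matrix.diagonal d)
    (hA : A'' = Λ * R - R * Λ) :
    (∃! P : ℕ → Matrix (Fin n) (Fin n) ℂ,
      P 0 = 1 ∧
      ∀ j : ℕ, Λ * P (j + 1) - P (j + 1) * Λ =
        (j : ℂ) • P j + A'' * P j + (D * P j - P j * D)) ∧
    (∀ P : ℕ → Matrix (Fin n) (Fin n) ℂ,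
      P 0 = 1 →
      (∀ j : ℕ, Λ * P (j + 1) - P (j + 1) * Λ =
        (j : ℂ) • P j + A'' * P j + (D * P j - P j * D)) →
      (P 1 - diagPart (P 1) = R ∧
       ∀ j : ℕ, diagPart (P (j + 1)) =
        (-(1 : ℂ) / ((j : ℂ) + 1)) • diagPart (A'' * (P (j + 1) - diagPart (P (j + 1)))))) := by
  subst hΛ hD hA
  have hAd : ∀ i, (Matrix.diagonal lam * R - R * Matrix.diagonal lam) i i = 0 := by
    intro i
    simp [Matrix.sub_apply, Matrix.diagonal_mul, Matrix.mul_diagonal, hR i]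
  set A : Matrix (Fin n) (Fin n) ℂ := Matrix.diagonal lam * R - R * Matrix.diagonal lam with hAdef
  constructor
  · refine ⟨seqP lam d A, ⟨rfl, fun j => seqP_rec lam d A hlam hAd j⟩, ?_⟩
    intro Q hQ
    exact uniq lam d A hlam hAd Q (seqP lam d A) hQ.1 rfl hQ.2
      (fun j => seqP_rec lam d A hlam hAd j)
  · intro P hP0 hrec
    constructor
    · -- off-diagonal part of P 1 is R
      ext i k
      have h := congrFun (congrFun (hrec 0) i) k
      simp only [Matrix.sub_apply, Matrix.add_apply, Matrix.smul_apply,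
        Matrix.diagonal_mul, Matrix.mul_diagonal, Nat.cast_zero, zero_smul, hP0,
        Matrix.mul_one, Matrix.one_mul, zero_add, sub_self, Matrix.zero_apply, add_zero] at h
      -- h : lam i * P 1 i k - P 1 i k * lam k = A i k
      by_cases hik : i = k
      · subst hik
        simp [diagPart, hR i]
      · have hlk : lam i - lam k ≠ 0 := sub_ne_zero.mpr (fun hh => hik (hlam hh))
        have hA2 : A i k = (lam i - lam k) * R i k := by
          simp [hAdef, Matrix.sub_apply, Matrix.diagonal_mul, Matrix.mul_diagonal]; ring
        have : (lam i - lam k) * P 1 i k = (lam i - lam k) * R i k := by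
          rw [← hA2]; rw [← h]; ring
        have hPR : P 1 i k = R i k := mul_left_cancel₀ hlk this
        simp [diagPart, Matrix.diagonal_apply_ne _ hik, hPR]
    · intro j
      have hsd := sol_diag lam d A P hrec j
      ext i k
      by_cases hik : i = k
      · subst hik
        have h := hsd i
        have hA3 : (A * (P (j + 1) - Matrix.diagonal fun x => P (j + 1) x x)) i i
            = (A * P (j + 1)) i i := by
          rw [Matrix.mul_sub, Matrix.sub_apply]
          simp [Matrix.mul_diagonal, hAd i]
        have hj1 : ((j : ℂ) + 1) ≠ 0 := Nat.cast_add_one_ne_zero j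
        simp only [diagPart, Matrix.smul_apply, Matrix.diagonal_apply_eq]
        rw [hA3]
        rw [smul_eq_mul, eq_comm, div_mul_eq_mul_div, div_eq_iff hj1]
        linear_combination -h
      · simp [diagPart, Matrix.diagonal_apply_ne _ hik]
end

section
/- Let n ≥ 1, let Λ = diag(λ₁,…,λₙ) be a diagonal complex n×n matrix with pairwise distinct diagonal entries, let D be a diagonal complex n×n matrix, let R be a complex n×n matrix with zero diagonal entries, and set A_∞ = D + (ΛR − RΛ). Then there exists a unique n×n matrix P̂ with entries in the ring ℂ[[z]] of formal power series, with constant term Iₙ, satisfying the identity of matrices over ℂ[[z]]: z²·(dP̂/dz) = (Λ + z·A_∞)·P̂ − P̂·(Λ + z·D). Moreover, the off-diagonal part of the coefficient of z in P̂ equals −R. -/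
open Matrix PowerSeries Finset

namespace Stmt4Aux

variable {n : ℕ}

/-- RHS of the commutator recursion: `[Λ, c_{m+1}] = m c_m - A c_m + c_m D`. -/
noncomputable def qm (A : Matrix (Fin n) (Fin n) ℂ) (d : Fin n → ℂ) (m : ℕ)
    (B : Matrix (Fin n) (Fin n) ℂ) : Matrix (Fin n) (Fin n) ℂ :=
  (m : ℂ) • B - A * B + B * Matrix.diagonal d

noncomputable def off (lam : Fin n → ℂ) (Q : Matrix (Fin n) (Fin n) ℂ) :
    Matrix (Fin n) (Fin n) ℂ :=
  Matrix.of fun i j => if i = j then 0 else Q i j / (lam i - lam j)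

noncomputable def nxt (lam : Fin n → ℂ) (A : Matrix (Fin n) (Fin n) ℂ) (d : Fin n → ℂ)
    (m : ℕ) (B : Matrix (Fin n) (Fin n) ℂ) : Matrix (Fin n) (Fin n) ℂ :=
  off lam (qm A d m B) +
    Matrix.diagonal (fun i => ((m : ℂ) + 1)⁻¹ * ∑ k, A i k * off lam (qm A d m B) k i)

noncomputable def c (lam : Fin n → ℂ) (A : Matrix (Fin n) (Fin n) ℂ) (d : Fin n → ℂ) :
    ℕ → Matrix (Fin n) (Fin n) ℂ
  | 0 => 1
  | m + 1 => nxt lam A d m (c lam A d m)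

lemma c_offdiag (lam : Fin n → ℂ) (A : Matrix (Fin n) (Fin n) ℂ) (d : Fin n → ℂ)
    (m : ℕ) {i j : Fin n} (h : i ≠ j) :
    c lam A d (m + 1) i j = qm A d m (c lam A d m) i j / (lam i - lam j) := by
  simp [c, nxt, off, Matrix.add_apply, Matrix.diagonal_apply_ne _ h, h]

lemma c_diag (lam : Fin n → ℂ) (A : Matrix (Fin n) (Fin n) ℂ) (d : Fin n → ℂ)
    (m : ℕ) (i : Fin n) :
    ((m : ℂ) + 1) * c lam A d (m + 1) i i
      = ∑ k ∈ univ.erase i, A i k * c lam A d (m + 1) k i := by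
  have hm : ((m : ℂ) + 1) ≠ 0 := by
    have : ((m + 1 : ℕ) : ℂ) ≠ 0 := Nat.cast_ne_zero.mpr (Nat.succ_ne_zero m)
    push_cast at this; exact this
  have : c lam A d (m + 1) i i
      = ((m : ℂ) + 1)⁻¹ * ∑ k, A i k * off lam (qm A d m (c lam A d m)) k i := by
    simp [c, nxt, Matrix.add_apply, off, Matrix.diagonal_apply_eq]
  rw [this, ← mul_assoc, mul_inv_cancel₀ hm, one_mul]
  rw [show (∑ k, A i k * off lam (qm A d m (c lam A d m)) k i)
      = ∑ k ∈ univ.erase i, A i k * off lam (qm A d m (c lam A d m)) k i from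
    (Finset.sum_erase _ (by simp [off])).symm]
  refine Finset.sum_congr rfl fun k hk => ?_
  have hki : k ≠ i := Finset.ne_of_mem_erase hk
  rw [c_offdiag lam A d m hki]
  simp [off, hki]

/-- The key recursion, satisfied by `c`. -/
lemma c_E (lam : Fin n → ℂ) (hlam : Function.Injective lam)
    (A : Matrix (Fin n) (Fin n) ℂ) (d : Fin n → ℂ) (hAd : ∀ i, A i i = d i)
    (m : ℕ) (i j : Fin n) :
    (m : ℂ) * c lam A d m i j
      = (lam i - lam j) * c lam A d (m + 1) i j
        + (A * c lam A d m) i j - (c lam A d m * Matrix.diagonal d) i j := by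
  rcases eq_or_ne i j with rfl | hij
  · -- diagonal case
    have hdiag : (m : ℂ) * c lam A d m i i = ∑ k ∈ univ.erase i, A i k * c lam A d m k i := by
      cases m with
      | zero =>
        simp only [Nat.cast_zero, zero_mul]
        refine (Finset.sum_eq_zero fun k hk => ?_).symm
        have : k ≠ i := Finset.ne_of_mem_erase hk
        simp [c, Matrix.one_apply_ne this]
      | succ s =>
        push_cast
        exact c_diag lam A d s i
    have hmul : (A * c lam A d m) i i = A i i * c lam A d m i i
        + ∑ k ∈ univ.erase i, A i k * c lam A d m k i := by
      rw [Matrix.mul_apply, ← Finset.add_sum_erase _ _ (Finset.mem_univ i)]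
    rw [hmul, Matrix.mul_diagonal, hAd, sub_self, zero_mul, zero_add, hdiag]
    ring
  · have hne : lam i - lam j ≠ 0 := sub_ne_zero.mpr fun h => hij (hlam h)
    rw [c_offdiag lam A d m hij, mul_div_cancel₀ _ hne]
    simp only [qm, Matrix.add_apply, Matrix.sub_apply, Matrix.smul_apply, smul_eq_mul]
    ring


/-- Uniqueness: any solution of the recursion with `p 0 = 1` agrees with `c`. -/
lemma unique_E (lam : Fin n → ℂ) (hlam : Function.Injective lam)
    (A : Matrix (Fin n) (Fin n) ℂ) (d : Fin n → ℂ) (hAd : ∀ i, A i i = d i)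
    (p : ℕ → Matrix (Fin n) (Fin n) ℂ) (hp0 : p 0 = 1)
    (hpE : ∀ (m : ℕ) (i j : Fin n),
      (m : ℂ) * p m i j
        = (lam i - lam j) * p (m + 1) i j
          + (A * p m) i j - (p m * Matrix.diagonal d) i j) :
    ∀ m, p m = c lam A d m := by
  intro m
  induction m with
  | zero => simpa [c] using hp0
  | succ m ih =>
    have hoff : ∀ i j : Fin n, i ≠ j → p (m + 1) i j = c lam A d (m + 1) i j := by
      intro i j hij
      have hne : lam i - lam j ≠ 0 := sub_ne_zero.mpr fun h => hij (hlam h)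
      have h1 := hpE m i j
      rw [ih] at h1
      have h2 := c_E lam hlam A d hAd m i j
      have h3 : (lam i - lam j) * p (m + 1) i j = (lam i - lam j) * c lam A d (m + 1) i j := by
        linear_combination h2 - h1
      exact mul_left_cancel₀ hne h3
    have hm : ((m : ℂ) + 1) ≠ 0 := by
      have : ((m + 1 : ℕ) : ℂ) ≠ 0 := Nat.cast_ne_zero.mpr (Nat.succ_ne_zero m)
      push_cast at this; exact this
    ext i j
    rcases eq_or_ne i j with rfl | hij
    · -- diagonal entries
      have h1 := hpE (m + 1) i i
      have hsum : (A * p (m + 1)) i i = A i i * p (m + 1) i i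
          + ∑ k ∈ univ.erase i, A i k * p (m + 1) k i := by
        rw [Matrix.mul_apply, ← Finset.add_sum_erase _ _ (Finset.mem_univ i)]
      rw [sub_self, zero_mul, zero_add, hsum, Matrix.mul_diagonal, hAd] at h1
      have h1' : ((m : ℂ) + 1) * p (m + 1) i i
          = ∑ k ∈ univ.erase i, A i k * p (m + 1) k i := by
        push_cast at h1
        linear_combination h1
      have h2 : ∑ k ∈ univ.erase i, A i k * p (m + 1) k i
          = ∑ k ∈ univ.erase i, A i k * c lam A d (m + 1) k i := by
        refine Finset.sum_congr rfl fun k hk => ?_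
        rw [hoff k i (Finset.ne_of_mem_erase hk)]
      rw [h2, ← c_diag lam A d m i] at h1'
      exact mul_left_cancel₀ hm h1'
    · exact hoff i j hij

/-! ### Power series coefficient helpers -/

lemma coeff_succ_CXC_mul (a b : ℂ) (f : PowerSeries ℂ) (m : ℕ) :
    PowerSeries.coeff (R := ℂ) (m + 1) ((PowerSeries.C (R := ℂ) a + PowerSeries.X * PowerSeries.C (R := ℂ) b) * f)
      = a * PowerSeries.coeff (R := ℂ) (m + 1) f + b * PowerSeries.coeff (R := ℂ) m f := by
  rw [add_mul, map_add, coeff_C_mul, mul_assoc, coeff_succ_X_mul, coeff_C_mul]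

lemma coeff_succ_mul_CXC (a b : ℂ) (f : PowerSeries ℂ) (m : ℕ) :
    PowerSeries.coeff (R := ℂ) (m + 1) (f * (PowerSeries.C (R := ℂ) a + PowerSeries.X * PowerSeries.C (R := ℂ) b))
      = a * PowerSeries.coeff (R := ℂ) (m + 1) f + b * PowerSeries.coeff (R := ℂ) m f := by
  rw [mul_comm]; exact coeff_succ_CXC_mul a b f m

lemma coeff_zero_CXC_mul (a b : ℂ) (f : PowerSeries ℂ) :
    PowerSeries.coeff (R := ℂ) 0 ((PowerSeries.C (R := ℂ) a + PowerSeries.X * PowerSeries.C (R := ℂ) b) * f)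
      = a * PowerSeries.coeff (R := ℂ) 0 f := by
  simp [add_mul, mul_assoc]

lemma coeff_zero_mul_CXC (a b : ℂ) (f : PowerSeries ℂ) :
    PowerSeries.coeff (R := ℂ) 0 (f * (PowerSeries.C (R := ℂ) a + PowerSeries.X * PowerSeries.C (R := ℂ) b))
      = a * PowerSeries.coeff (R := ℂ) 0 f := by
  rw [mul_comm]; exact coeff_zero_CXC_mul a b f

lemma coeff_succ_X_sq_mul_derivative (f : PowerSeries ℂ) (m : ℕ) :
    PowerSeries.coeff (R := ℂ) (m + 1) ((PowerSeries.X ^ 2 : PowerSeries ℂ) * PowerSeries.derivative ℂ f)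
      = (m : ℂ) * PowerSeries.coeff (R := ℂ) m f := by
  cases m with
  | zero => simp [coeff_X_pow_mul']
  | succ s =>
    have h1 : s + 1 + 1 = s + 2 := rfl
    rw [h1, coeff_X_pow_mul, PowerSeries.coeff_derivative]
    push_cast; ring

lemma coeff_zero_X_sq_mul (g : PowerSeries ℂ) :
    PowerSeries.coeff (R := ℂ) 0 ((PowerSeries.X ^ 2 : PowerSeries ℂ) * g) = 0 := by
  simp [coeff_X_pow_mul']


lemma coeff_succ_rhs (lam d : Fin n → ℂ) (A : Matrix (Fin n) (Fin n) ℂ)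
    (P : Matrix (Fin n) (Fin n) (PowerSeries ℂ)) (m : ℕ) (i j : Fin n) :
    PowerSeries.coeff (R := ℂ) (m + 1)
      (((((Matrix.diagonal lam).map (PowerSeries.C (R := ℂ))
            + (PowerSeries.X : PowerSeries ℂ) • A.map (PowerSeries.C (R := ℂ))) * P
        - P * ((Matrix.diagonal lam).map (PowerSeries.C (R := ℂ))
            + (PowerSeries.X : PowerSeries ℂ) • (Matrix.diagonal d).map (PowerSeries.C (R := ℂ))))) i j)
      = (lam i - lam j) * PowerSeries.coeff (R := ℂ) (m + 1) (P i j)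
        + (A * Matrix.of (fun a b => PowerSeries.coeff (R := ℂ) m (P a b))) i j
        - (Matrix.of (fun a b => PowerSeries.coeff (R := ℂ) m (P a b)) * Matrix.diagonal d) i j := by
  have hL : PowerSeries.coeff (R := ℂ) (m + 1)
      (((((Matrix.diagonal lam).map (PowerSeries.C (R := ℂ))
            + (PowerSeries.X : PowerSeries ℂ) • A.map (PowerSeries.C (R := ℂ))) * P)) i j)
      = lam i * PowerSeries.coeff (R := ℂ) (m + 1) (P i j)
        + ∑ k, A i k * PowerSeries.coeff (R := ℂ) m (P k j) := by
    simp only [Matrix.mul_apply, Matrix.add_apply, Matrix.smul_apply, Matrix.map_apply,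
      smul_eq_mul, map_sum]
    rw [Finset.sum_congr rfl
      (fun k _ => coeff_succ_CXC_mul (Matrix.diagonal lam i k) (A i k) (P k j) m)]
    rw [Finset.sum_add_distrib]
    congr 1
    simp [Matrix.diagonal_apply, ite_mul]
  have hR : PowerSeries.coeff (R := ℂ) (m + 1)
      ((P * ((Matrix.diagonal lam).map (PowerSeries.C (R := ℂ))
            + (PowerSeries.X : PowerSeries ℂ) • (Matrix.diagonal d).map (PowerSeries.C (R := ℂ)))) i j)
      = lam j * PowerSeries.coeff (R := ℂ) (m + 1) (P i j)
        + d j * PowerSeries.coeff (R := ℂ) m (P i j) := by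
    simp only [Matrix.mul_apply, Matrix.add_apply, Matrix.smul_apply, Matrix.map_apply,
      smul_eq_mul, map_sum]
    rw [Finset.sum_congr rfl
      (fun k _ => coeff_succ_mul_CXC (Matrix.diagonal lam k j) (Matrix.diagonal d k j) (P i k) m)]
    rw [Finset.sum_add_distrib]
    congr 1
    · simp [Matrix.diagonal_apply, ite_mul]
    · simp [Matrix.diagonal_apply, ite_mul]
  rw [Matrix.sub_apply, map_sub, hL, hR, Matrix.mul_apply, Matrix.mul_diagonal]
  simp only [Matrix.of_apply]
  ring

lemma coeff_zero_rhs (lam d : Fin n → ℂ) (A : Matrix (Fin n) (Fin n) ℂ)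
    (P : Matrix (Fin n) (Fin n) (PowerSeries ℂ)) (i j : Fin n) :
    PowerSeries.coeff (R := ℂ) 0
      (((((Matrix.diagonal lam).map (PowerSeries.C (R := ℂ))
            + (PowerSeries.X : PowerSeries ℂ) • A.map (PowerSeries.C (R := ℂ))) * P
        - P * ((Matrix.diagonal lam).map (PowerSeries.C (R := ℂ))
            + (PowerSeries.X : PowerSeries ℂ) • (Matrix.diagonal d).map (PowerSeries.C (R := ℂ))))) i j)
      = (lam i - lam j) * PowerSeries.coeff (R := ℂ) 0 (P i j) := by
  have hL : PowerSeries.coeff (R := ℂ) 0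
      (((((Matrix.diagonal lam).map (PowerSeries.C (R := ℂ))
            + (PowerSeries.X : PowerSeries ℂ) • A.map (PowerSeries.C (R := ℂ))) * P)) i j)
      = lam i * PowerSeries.coeff (R := ℂ) 0 (P i j) := by
    simp only [Matrix.mul_apply, Matrix.add_apply, Matrix.smul_apply, Matrix.map_apply,
      smul_eq_mul, map_sum]
    rw [Finset.sum_congr rfl
      (fun k _ => coeff_zero_CXC_mul (Matrix.diagonal lam i k) (A i k) (P k j))]
    simp [Matrix.diagonal_apply, ite_mul]
  have hR : PowerSeries.coeff (R := ℂ) 0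
      ((P * ((Matrix.diagonal lam).map (PowerSeries.C (R := ℂ))
            + (PowerSeries.X : PowerSeries ℂ) • (Matrix.diagonal d).map (PowerSeries.C (R := ℂ)))) i j)
      = lam j * PowerSeries.coeff (R := ℂ) 0 (P i j) := by
    simp only [Matrix.mul_apply, Matrix.add_apply, Matrix.smul_apply, Matrix.map_apply,
      smul_eq_mul, map_sum]
    rw [Finset.sum_congr rfl
      (fun k _ => coeff_zero_mul_CXC (Matrix.diagonal lam k j) (Matrix.diagonal d k j) (P i k))]
    simp [Matrix.diagonal_apply, ite_mul]
  rw [Matrix.sub_apply, map_sub, hL, hR]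
  ring

end Stmt4Aux

open Stmt4Aux

/-- Formal normal form: for `Λ` diagonal with pairwise distinct entries, `D` diagonal,
`R` with zero diagonal, and `A∞ = D + [Λ,R]`, there is a unique matrix `P̂` of formal
power series with constant term `1` satisfying
`z² dP̂/dz = (Λ + z A∞) P̂ - P̂ (Λ + z D)`; moreover the off-diagonal part of the
coefficient of `z` in `P̂` is `-R`. -/
theorem stmt4 (n : ℕ) (hn : 1 ≤ n) (lam : Fin n → ℂ) (hlam : Function.Injective lam)
    (d : Fin n → ℂ) (R : Matrix (Fin n) (Fin n) ℂ) (hR : ∀ i, R i i = 0)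
    (Λ D A : Matrix (Fin n) (Fin n) ℂ)
    (hΛ : Λ = Matrix.diagonal lam) (hD : D = Matrix.diagonal d)
    (hA : A = D + (Λ * R - R * Λ)) :
    (∃! P : Matrix (Fin n) (Fin n) (PowerSeries ℂ),
      P.map (PowerSeries.constantCoeff (R := ℂ)) = 1 ∧
      (PowerSeries.X ^ 2 : PowerSeries ℂ) • P.map (PowerSeries.derivative ℂ) =
        (Λ.map (PowerSeries.C (R := ℂ)) + (PowerSeries.X : PowerSeries ℂ) • A.map (PowerSeries.C (R := ℂ))) * P
        - P * (Λ.map (PowerSeries.C (R := ℂ)) + (PowerSeries.X : PowerSeries ℂ) • D.map (PowerSeries.C (R := ℂ)))) ∧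
    (∀ P : Matrix (Fin n) (Fin n) (PowerSeries ℂ),
      P.map (PowerSeries.constantCoeff (R := ℂ)) = 1 →
      (PowerSeries.X ^ 2 : PowerSeries ℂ) • P.map (PowerSeries.derivative ℂ) =
        (Λ.map (PowerSeries.C (R := ℂ)) + (PowerSeries.X : PowerSeries ℂ) • A.map (PowerSeries.C (R := ℂ))) * P
        - P * (Λ.map (PowerSeries.C (R := ℂ)) + (PowerSeries.X : PowerSeries ℂ) • D.map (PowerSeries.C (R := ℂ))) →
      ∀ i j : Fin n, i ≠ j → PowerSeries.coeff (R := ℂ) 1 (P i j) = -R i j) := by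
  have hAd : ∀ i, A i i = d i := by
    intro i
    simp [hA, hΛ, hD, Matrix.add_apply, Matrix.sub_apply, Matrix.diagonal_mul,
      Matrix.mul_diagonal, hR]
  have hAoff : ∀ i j, i ≠ j → A i j = (lam i - lam j) * R i j := by
    intro i j h
    simp [hA, hΛ, hD, Matrix.add_apply, Matrix.sub_apply, Matrix.diagonal_mul,
      Matrix.mul_diagonal, Matrix.diagonal_apply_ne _ h]
    ring
  subst hΛ hD
  clear hA
  -- key coefficientwise translation of the differential equation
  have key : ∀ P : Matrix (Fin n) (Fin n) (PowerSeries ℂ),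
      ((PowerSeries.X ^ 2 : PowerSeries ℂ) • P.map (PowerSeries.derivative ℂ) =
        ((Matrix.diagonal lam).map (PowerSeries.C (R := ℂ))
            + (PowerSeries.X : PowerSeries ℂ) • A.map (PowerSeries.C (R := ℂ))) * P
        - P * ((Matrix.diagonal lam).map (PowerSeries.C (R := ℂ))
            + (PowerSeries.X : PowerSeries ℂ) • (Matrix.diagonal d).map (PowerSeries.C (R := ℂ))))
      ↔ ((∀ i j, (lam i - lam j) * PowerSeries.coeff (R := ℂ) 0 (P i j) = 0) ∧
          ∀ (m : ℕ) (i j : Fin n),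
            (m : ℂ) * PowerSeries.coeff (R := ℂ) m (P i j)
              = (lam i - lam j) * PowerSeries.coeff (R := ℂ) (m + 1) (P i j)
                + (A * Matrix.of (fun a b => PowerSeries.coeff (R := ℂ) m (P a b))) i j
                - (Matrix.of (fun a b => PowerSeries.coeff (R := ℂ) m (P a b)) * Matrix.diagonal d) i j) := by
    intro P
    have hLHS : ∀ (i j : Fin n) (N : ℕ),
        PowerSeries.coeff (R := ℂ) N
          (((PowerSeries.X ^ 2 : PowerSeries ℂ) • P.map (PowerSeries.derivative ℂ)) i j)
        = PowerSeries.coeff (R := ℂ) N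
          ((PowerSeries.X ^ 2 : PowerSeries ℂ) * PowerSeries.derivative ℂ (P i j)) := by
      intro i j N
      simp [Matrix.smul_apply, Matrix.map_apply, smul_eq_mul]
    constructor
    · intro h
      have h' : ∀ (i j : Fin n) (N : ℕ),
          PowerSeries.coeff (R := ℂ) N
            ((PowerSeries.X ^ 2 : PowerSeries ℂ) * PowerSeries.derivative ℂ (P i j))
          = PowerSeries.coeff (R := ℂ) N
            ((((Matrix.diagonal lam).map (PowerSeries.C (R := ℂ))
                + (PowerSeries.X : PowerSeries ℂ) • A.map (PowerSeries.C (R := ℂ))) * P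
              - P * ((Matrix.diagonal lam).map (PowerSeries.C (R := ℂ))
                + (PowerSeries.X : PowerSeries ℂ) • (Matrix.diagonal d).map (PowerSeries.C (R := ℂ)))) i j) := by
        intro i j N
        rw [← hLHS, h]
      constructor
      · intro i j
        have := h' i j 0
        rw [coeff_zero_X_sq_mul, coeff_zero_rhs] at this
        exact this.symm
      · intro m i j
        have := h' i j (m + 1)
        rw [coeff_succ_X_sq_mul_derivative, coeff_succ_rhs] at this
        exact this
    · rintro ⟨h0, hE⟩
      ext i j N
      rw [hLHS i j N]
      cases N with
      | zero =>
        rw [coeff_zero_X_sq_mul, coeff_zero_rhs]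
        exact (h0 i j).symm
      | succ m =>
        rw [coeff_succ_X_sq_mul_derivative, coeff_succ_rhs]
        exact hE m i j
  -- the canonical solution
  set Phat : Matrix (Fin n) (Fin n) (PowerSeries ℂ) :=
    Matrix.of fun i j => PowerSeries.mk fun m => c lam A d m i j with hPhat
  have hPhatco : ∀ (m : ℕ) (i j : Fin n),
      PowerSeries.coeff (R := ℂ) m (Phat i j) = c lam A d m i j := by
    intro m i j; simp [hPhat, PowerSeries.coeff_mk]
  have hPhatof : ∀ m : ℕ,
      Matrix.of (fun a b => PowerSeries.coeff (R := ℂ) m (Phat a b)) = c lam A d m := by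
    intro m; ext a b; simp [hPhatco]
  have hc0 : c lam A d 0 = 1 := rfl
  have hPhat0 : Phat.map (PowerSeries.constantCoeff (R := ℂ)) = 1 := by
    ext i j
    rw [Matrix.map_apply, ← PowerSeries.coeff_zero_eq_constantCoeff_apply, hPhatco, hc0]
  have hPhatEq : (PowerSeries.X ^ 2 : PowerSeries ℂ) • Phat.map (PowerSeries.derivative ℂ) =
      ((Matrix.diagonal lam).map (PowerSeries.C (R := ℂ))
          + (PowerSeries.X : PowerSeries ℂ) • A.map (PowerSeries.C (R := ℂ))) * Phat
      - Phat * ((Matrix.diagonal lam).map (PowerSeries.C (R := ℂ))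
          + (PowerSeries.X : PowerSeries ℂ) • (Matrix.diagonal d).map (PowerSeries.C (R := ℂ))) := by
    rw [key]
    constructor
    · intro i j
      rcases eq_or_ne i j with rfl | hij
      · simp
      · rw [hPhatco, hc0]
        simp [Matrix.one_apply_ne hij]
    · intro m i j
      rw [hPhatco, hPhatco, hPhatof]
      exact c_E lam hlam A d hAd m i j
  -- uniqueness of coefficient systems
  have huniq : ∀ Q : Matrix (Fin n) (Fin n) (PowerSeries ℂ),
      Q.map (PowerSeries.constantCoeff (R := ℂ)) = 1 →
      (PowerSeries.X ^ 2 : PowerSeries ℂ) • Q.map (PowerSeries.derivative ℂ) =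
        ((Matrix.diagonal lam).map (PowerSeries.C (R := ℂ))
            + (PowerSeries.X : PowerSeries ℂ) • A.map (PowerSeries.C (R := ℂ))) * Q
        - Q * ((Matrix.diagonal lam).map (PowerSeries.C (R := ℂ))
            + (PowerSeries.X : PowerSeries ℂ) • (Matrix.diagonal d).map (PowerSeries.C (R := ℂ))) →
      ∀ m : ℕ, Matrix.of (fun a b => PowerSeries.coeff (R := ℂ) m (Q a b)) = c lam A d m := by
    intro Q hQ0 hQE
    have h := (key Q).mp hQE
    refine unique_E lam hlam A d hAd
      (fun m => Matrix.of fun a b => PowerSeries.coeff (R := ℂ) m (Q a b)) ?_ ?_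
    · ext a b
      have := congrFun (congrFun hQ0 a) b
      rw [Matrix.map_apply] at this
      simpa [PowerSeries.coeff_zero_eq_constantCoeff_apply] using this
    · intro m i j
      simpa using h.2 m i j
  refine ⟨⟨Phat, ⟨hPhat0, hPhatEq⟩, ?_⟩, ?_⟩
  · rintro Q ⟨hQ0, hQE⟩
    ext i j N
    have := congrFun (congrFun (huniq Q hQ0 hQE N) i) j
    rw [Matrix.of_apply] at this
    rw [this, hPhatco]
  · intro P hP0 hPE i j hij
    have h := huniq P hP0 hPE 1
    have hco : PowerSeries.coeff (R := ℂ) 1 (P i j) = c lam A d 1 i j := by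
      have := congrFun (congrFun h i) j
      rwa [Matrix.of_apply] at this
    have hne : lam i - lam j ≠ 0 := sub_ne_zero.mpr fun h' => hij (hlam h')
    rw [hco, c_offdiag lam A d 0 hij]
    rw [show qm A d 0 (c lam A d 0) i j = -((lam i - lam j) * R i j) by
      simp [qm, hc0, Matrix.mul_one, Matrix.one_mul, Matrix.sub_apply, Matrix.add_apply,
        Matrix.smul_apply, Matrix.diagonal_apply_ne _ hij, hAoff i j hij,
        Matrix.one_apply_ne hij]]
    field_simp
end

section
/- Let n ≥ 1, let U ⊆ ℂⁿ be an open set, let R : U → Mₙ(ℂ) be holomorphic with zero diagonal entries at every point, let D ∈ Mₙ(ℂ) be a constant diagonal matrix, and write Λ(u) = diag(u₁,…,uₙ). For (u,z) ∈ U × (ℂ ∖ {0}) define A(u,z) = Λ(u)/z² + ([Λ(u),R(u)] + D)/z and, for i ∈ {1,…,n}, Ω_i(u,z) = −E_i/z − [E_i,R(u)]. Then the zero-curvature equations ∂A/∂u_i − ∂Ω_i/∂z + Ω_iA − AΩ_i = 0 (for all i) and ∂Ω_j/∂u_i − ∂Ω_i/∂u_j + Ω_iΩ_j − Ω_jΩ_i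 = 0 (for all i,j) hold at every point of U × (ℂ ∖ {0}) if and only if R satisfies the isomonodromy system on U: for all i,j ∈ {1,…,n} and all u ∈ U, ∂/∂u_i [Λ(u),R(u)] = −[ [Λ(u),R(u)] + D , [E_i,R(u)] ] and ∂/∂u_i [E_j,R(u)] − ∂/∂u_j [E_i,R(u)] = [ [E_i,R(u)] , [E_j,R(u)] ]. -/
open Matrix

/-- The partial derivative `∂f/∂uᵢ` of a matrix-valued function on `ℂⁿ`,
taken entrywise. -/
noncomputable def matrixPderiv {n : ℕ} (i : Fin n)
    (f : (Fin n → ℂ) → Matrix (Fin n) (Fin n) ℂ) (u : Fin n → ℂ) :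
    Matrix (Fin n) (Fin n) ℂ :=
  Matrix.of fun a b => fderiv ℂ (fun v => f v a b) u (Pi.single i 1)

/-- The derivative `∂g/∂z` of a matrix-valued function of one complex variable,
taken entrywise. -/
noncomputable def matrixZderiv {n : ℕ} (g : ℂ → Matrix (Fin n) (Fin n) ℂ) (z : ℂ) :
    Matrix (Fin n) (Fin n) ℂ :=
  Matrix.of fun a b => deriv (fun w => g w a b) z

section Aux

lemma stmt6_E_eq_diag {n : ℕ} (i : Fin n) :
    Matrix.single i i (1:ℂ) = Matrix.diagonal (Pi.single i 1) := by
  ext a b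
  simp only [Matrix.single, Matrix.of_apply, Matrix.diagonal_apply, Pi.single_apply]
  split_ifs <;> simp_all
  omega

lemma stmt6_diag_comm {n : ℕ} (u v : Fin n → ℂ) :
    Matrix.diagonal u * Matrix.diagonal v = Matrix.diagonal v * Matrix.diagonal u := by
  rw [diagonal_mul_diagonal, diagonal_mul_diagonal]
  simp only [mul_comm]

/-- key algebraic identity for the first equation -/
lemma stmt6_key1 {n : ℕ} (Λ R E D : Matrix (Fin n) (Fin n) ℂ)
    (h1 : Λ * E = E * Λ) (h2 : D * E = E * D) :
    (((Λ*R - R*Λ + D)*E - E*(Λ*R - R*Λ + D)) + (Λ*(E*R - R*E) - (E*R - R*E)*Λ)) = 0 := by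
  have h : ((Λ*R - R*Λ + D)*E - E*(Λ*R - R*Λ + D)) + (Λ*(E*R - R*E) - (E*R - R*E)*Λ)
      = R*(E*Λ - Λ*E) + (Λ*E - E*Λ)*R + (D*E - E*D) := by noncomm_ring
  rw [h, h1, h2]
  simp

/-- key algebraic identity for the second equation -/
lemma stmt6_key2 {n : ℕ} (R Ei Ej : Matrix (Fin n) (Fin n) ℂ)
    (h1 : Ei * Ej = Ej * Ei) :
    (Ei*(Ej*R - R*Ej) - (Ej*R - R*Ej)*Ei) + ((Ei*R - R*Ei)*Ej - Ej*(Ei*R - R*Ei)) = 0 := by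
  have h : (Ei*(Ej*R - R*Ej) - (Ej*R - R*Ej)*Ei) + ((Ei*R - R*Ei)*Ej - Ej*(Ei*R - R*Ei))
      = (Ei*Ej - Ej*Ei)*R + R*(Ej*Ei - Ei*Ej) := by noncomm_ring
  rw [h, h1]
  simp

/-- expansion of the commutator `[Ω, A]` -/
lemma stmt6_commAΩ {n : ℕ} (Λ B Ei Ci : Matrix (Fin n) (Fin n) ℂ) (z : ℂ)
    (h1 : Λ * Ei = Ei * Λ)
    (h2 : (B * Ei - Ei * B) + (Λ * Ci - Ci * Λ) = 0) :
    (-(z⁻¹ • Ei) - Ci) * ((z ^ 2)⁻¹ • Λ + z⁻¹ • B)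
      - ((z ^ 2)⁻¹ • Λ + z⁻¹ • B) * (-(z⁻¹ • Ei) - Ci)
    = z⁻¹ • (B * Ci - Ci * B) := by
  have hc : (z ^ 2 : ℂ)⁻¹ = z⁻¹ * z⁻¹ := by rw [sq, mul_inv]
  have expand : (-(z⁻¹ • Ei) - Ci) * ((z ^ 2)⁻¹ • Λ + z⁻¹ • B)
      - ((z ^ 2)⁻¹ • Λ + z⁻¹ • B) * (-(z⁻¹ • Ei) - Ci)
      = (z⁻¹ * (z⁻¹ * z⁻¹)) • (Λ * Ei - Ei * Λ)
        + (z⁻¹ * z⁻¹) • ((B * Ei - Ei * B) + (Λ * Ci - Ci * Λ))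
        + z⁻¹ • (B * Ci - Ci * B) := by
    rw [hc]
    simp only [neg_mul, mul_neg, sub_mul, mul_sub, add_mul, mul_add,
      smul_mul_assoc, mul_smul_comm, smul_smul, smul_add, smul_sub, smul_neg, neg_smul]
    module
  rw [expand, h1, h2, sub_self, smul_zero, smul_zero, zero_add, zero_add]

/-- expansion of the commutator `[Ωᵢ, Ωⱼ]` -/
lemma stmt6_commΩΩ {n : ℕ} (Ei Ej Ci Cj : Matrix (Fin n) (Fin n) ℂ) (z : ℂ)
    (h1 : Ei * Ej = Ej * Ei)
    (h2 : (Ei * Cj - Cj * Ei) + (Ci * Ej - Ej * Ci) = 0) :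
    (-(z⁻¹ • Ei) - Ci) * (-(z⁻¹ • Ej) - Cj)
      - (-(z⁻¹ • Ej) - Cj) * (-(z⁻¹ • Ei) - Ci)
    = Ci * Cj - Cj * Ci := by
  have expand : (-(z⁻¹ • Ei) - Ci) * (-(z⁻¹ • Ej) - Cj)
      - (-(z⁻¹ • Ej) - Cj) * (-(z⁻¹ • Ei) - Ci)
      = (z⁻¹ * z⁻¹) • (Ei * Ej - Ej * Ei)
        + z⁻¹ • ((Ei * Cj - Cj * Ei) + (Ci * Ej - Ej * Ci))
        + (Ci * Cj - Cj * Ci) := by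
    simp only [neg_mul, mul_neg, sub_mul, mul_sub, add_mul, mul_add,
      smul_mul_assoc, mul_smul_comm, smul_smul, smul_add, smul_sub, smul_neg, neg_smul]
    module
  rw [expand, h1, h2, sub_self, smul_zero, smul_zero, zero_add, zero_add]

/-- derivative in `z` of `Ω` -/
lemma stmt6_zderiv {n : ℕ} (Ei M : Matrix (Fin n) (Fin n) ℂ) (z : ℂ) (hz : z ≠ 0) :
    matrixZderiv (fun w => -(w⁻¹ • Ei) - M) z = (z ^ 2)⁻¹ • Ei := by
  ext a b
  simp only [matrixZderiv, Matrix.of_apply, Matrix.sub_apply, Matrix.neg_apply,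
    Matrix.smul_apply, smul_eq_mul]
  have h := (((hasDerivAt_inv hz).mul_const (Ei a b)).neg.sub_const (M a b))
  refine h.deriv.trans ?_
  ring

/-- partial derivative of `A` in `uᵢ` -/
lemma stmt6_pderivA {n : ℕ} (R : (Fin n → ℂ) → Matrix (Fin n) (Fin n) ℂ)
    (D : Matrix (Fin n) (Fin n) ℂ) (u : Fin n → ℂ)
    (hR : ∀ a b, DifferentiableAt ℂ (fun v => R v a b) u)
    (i : Fin n) (z : ℂ) :
    matrixPderiv i (fun v => (z ^ 2)⁻¹ • Matrix.diagonal v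
      + z⁻¹ • ((Matrix.diagonal v * R v - R v * Matrix.diagonal v) + D)) u
    = (z ^ 2)⁻¹ • Matrix.single i i (1:ℂ)
      + z⁻¹ • matrixPderiv i
          (fun v => Matrix.diagonal v * R v - R v * Matrix.diagonal v) u := by
  have hproj : ∀ a : Fin n, HasFDerivAt (fun v : Fin n → ℂ => v a)
      (ContinuousLinearMap.proj a : (Fin n → ℂ) →L[ℂ] ℂ) u :=
    fun a => (ContinuousLinearMap.proj a : (Fin n → ℂ) →L[ℂ] ℂ).hasFDerivAt
  ext a b
  have hPentry : (fun v : Fin n → ℂ =>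
      (Matrix.diagonal v * R v - R v * Matrix.diagonal v) a b)
      = fun v => v a * R v a b - R v a b * v b := by
    funext v
    simp [Matrix.sub_apply, Matrix.diagonal_mul, Matrix.mul_diagonal]
  have hPd : DifferentiableAt ℂ
      (fun v : Fin n → ℂ => (Matrix.diagonal v * R v - R v * Matrix.diagonal v) a b) u := by
    rw [hPentry]
    exact ((hproj a).differentiableAt.mul (hR a b)).sub
      ((hR a b).mul (hproj b).differentiableAt)
  simp only [matrixPderiv, Matrix.of_apply, Matrix.add_apply, Matrix.smul_apply, smul_eq_mul]
  by_cases hab : a = b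
  · subst hab
    simp only [Matrix.diagonal_apply_eq]
    have h3 := ((hproj a).const_mul ((z ^ 2)⁻¹)).add
      ((hPd.hasFDerivAt.add_const (D a a)).const_mul z⁻¹)
    erw [h3.fderiv]
    simp [Matrix.single, Pi.single_apply, eq_comm]
  · simp only [Matrix.diagonal_apply_ne _ hab]
    have h3 := ((hasFDerivAt_const (0:ℂ) u).const_mul ((z ^ 2)⁻¹)).add
      ((hPd.hasFDerivAt.add_const (D a b)).const_mul z⁻¹)
    erw [h3.fderiv]
    have hstd : Matrix.single i i (1:ℂ) a b = 0 := by
      simp only [Matrix.single, Matrix.of_apply, ite_eq_right_iff, and_imp]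
      intro h1h h2h; exact absurd (h1h.symm.trans h2h) hab
    simp [hstd]

/-- partial derivative of `Ω j` in `uᵢ` -/
lemma stmt6_pderivΩ {n : ℕ} (R : (Fin n → ℂ) → Matrix (Fin n) (Fin n) ℂ)
    (u : Fin n → ℂ)
    (hR : ∀ a b, DifferentiableAt ℂ (fun v => R v a b) u)
    (i j : Fin n) (z : ℂ) :
    matrixPderiv i (fun v => -(z⁻¹ • Matrix.single j j (1:ℂ))
      - (Matrix.single j j (1:ℂ) * R v - R v * Matrix.single j j (1:ℂ))) u
    = -(matrixPderiv i (fun v => Matrix.single j j (1:ℂ) * R v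
        - R v * Matrix.single j j (1:ℂ)) u) := by
  have hproj : ∀ a : Fin n, HasFDerivAt (fun v : Fin n → ℂ => v a)
      (ContinuousLinearMap.proj a : (Fin n → ℂ) →L[ℂ] ℂ) u :=
    fun a => (ContinuousLinearMap.proj a : (Fin n → ℂ) →L[ℂ] ℂ).hasFDerivAt
  ext a b
  have hQentry : (fun v : Fin n → ℂ =>
      (Matrix.single j j (1:ℂ) * R v - R v * Matrix.single j j (1:ℂ)) a b)
      = fun v => (Pi.single j 1 : Fin n → ℂ) a * R v a b
          - R v a b * (Pi.single j 1 : Fin n → ℂ) b := by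
    funext v
    rw [stmt6_E_eq_diag]
    simp [Matrix.sub_apply, Matrix.diagonal_mul, Matrix.mul_diagonal]
  have hQd : DifferentiableAt ℂ (fun v : Fin n → ℂ =>
      (Matrix.single j j (1:ℂ) * R v - R v * Matrix.single j j (1:ℂ)) a b) u := by
    rw [hQentry]
    exact ((hR a b).const_mul _).sub ((hR a b).mul_const _)
  simp only [matrixPderiv, Matrix.of_apply]
  have hfun : (fun v : Fin n → ℂ => (-(z⁻¹ • Matrix.single j j (1:ℂ))
      - (Matrix.single j j (1:ℂ) * R v - R v * Matrix.single j j (1:ℂ))) a b)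
      = fun v => -(z⁻¹ * Matrix.single j j (1:ℂ) a b)
        - (Matrix.single j j (1:ℂ) * R v - R v * Matrix.single j j (1:ℂ)) a b := by
    funext v
    simp only [Matrix.sub_apply, Matrix.neg_apply, Matrix.smul_apply, smul_eq_mul]
  have h := hQd.hasFDerivAt.const_sub (-(z⁻¹ * Matrix.single j j (1:ℂ) a b))
  rw [hfun, h.fderiv]
  simp [Matrix.neg_apply]

end Aux

/-- Flatness of the connection `-d(Λ(u)/z) + ([Λ(u),R(u)] + D) dz/z - [dΛ(u),R(u)]` is
equivalent to the isomonodromy differential system for `R`: with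
`A(u,z) = Λ(u)/z² + ([Λ(u),R(u)] + D)/z` and `Ωᵢ(u,z) = -Eᵢ/z - [Eᵢ,R(u)]`, the
zero-curvature equations on `U × (ℂ ∖ {0})` hold iff
`∂ᵤᵢ[Λ,R] = -[[Λ,R] + D, [Eᵢ,R]]` and
`∂ᵤᵢ[E_j,R] - ∂ᵤⱼ[Eᵢ,R] = [[Eᵢ,R],[E_j,R]]` on `U`. -/
theorem stmt6 (n : ℕ) (hn : 1 ≤ n)
    (U : Set (Fin n → ℂ)) (hUopen : IsOpen U)
    (R : (Fin n → ℂ) → Matrix (Fin n) (Fin n) ℂ)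
    (hRholo : ∀ a b : Fin n, DifferentiableOn ℂ (fun u => R u a b) U)
    (hRdiag : ∀ u ∈ U, ∀ i : Fin n, R u i i = 0)
    (D : Matrix (Fin n) (Fin n) ℂ) (hD : D.IsDiag)
    (E : Fin n → Matrix (Fin n) (Fin n) ℂ)
    (hE : ∀ i, E i = Matrix.single i i (1 : ℂ))
    (A : (Fin n → ℂ) → ℂ → Matrix (Fin n) (Fin n) ℂ)
    (hA : ∀ u z, A u z = (z ^ 2)⁻¹ • Matrix.diagonal u
      + z⁻¹ • ((Matrix.diagonal u * R u - R u * Matrix.diagonal u) + D))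
    (Ω : Fin n → (Fin n → ℂ) → ℂ → Matrix (Fin n) (Fin n) ℂ)
    (hΩ : ∀ i u z, Ω i u z = -(z⁻¹ • E i) - (E i * R u - R u * E i)) :
    ((∀ i : Fin n, ∀ u ∈ U, ∀ z : ℂ, z ≠ 0 →
        matrixPderiv i (fun v => A v z) u - matrixZderiv (fun w => Ω i u w) z
          + Ω i u z * A u z - A u z * Ω i u z = 0) ∧
     (∀ i j : Fin n, ∀ u ∈ U, ∀ z : ℂ, z ≠ 0 →
        matrixPderiv i (fun v => Ω j v z) u - matrixPderiv j (fun v => Ω i v z) u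
          + Ω i u z * Ω j u z - Ω j u z * Ω i u z = 0))
    ↔
    ((∀ i : Fin n, ∀ u ∈ U,
        matrixPderiv i
            (fun v => Matrix.diagonal v * R v - R v * Matrix.diagonal v) u =
          -(((Matrix.diagonal u * R u - R u * Matrix.diagonal u) + D)
              * (E i * R u - R u * E i)
            - (E i * R u - R u * E i)
              * ((Matrix.diagonal u * R u - R u * Matrix.diagonal u) + D))) ∧
     (∀ i j : Fin n, ∀ u ∈ U,
        matrixPderiv i (fun v => E j * R v - R v * E j) u
          - matrixPderiv j (fun v => E i * R v - R v * E i) u =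
        (E i * R u - R u * E i) * (E j * R u - R u * E j)
          - (E j * R u - R u * E j) * (E i * R u - R u * E i))) := by
  -- commutation facts
  have hEd : ∀ k : Fin n, E k = Matrix.diagonal (Pi.single k 1) := fun k => by
    rw [hE k, stmt6_E_eq_diag]
  have hΛE : ∀ (u : Fin n → ℂ) (k : Fin n),
      Matrix.diagonal u * E k = E k * Matrix.diagonal u := fun u k => by
    rw [hEd, stmt6_diag_comm]
  have hDE : ∀ k : Fin n, D * E k = E k * D := fun k => by
    rw [← hD.diagonal_diag, hEd, stmt6_diag_comm]
  have hEE : ∀ k l : Fin n, E k * E l = E l * E k := fun k l => by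
    rw [hEd, hEd, stmt6_diag_comm]
  -- differentiability at points of U
  have hR' : ∀ u ∈ U, ∀ a b : Fin n, DifferentiableAt ℂ (fun v => R v a b) u :=
    fun u hu a b => (hRholo a b).differentiableAt (hUopen.mem_nhds hu)
  -- reduction of the first zero-curvature equation
  have key1 : ∀ i : Fin n, ∀ u ∈ U, ∀ z : ℂ, z ≠ 0 →
      matrixPderiv i (fun v => A v z) u - matrixZderiv (fun w => Ω i u w) z
        + Ω i u z * A u z - A u z * Ω i u z
      = z⁻¹ • (matrixPderiv i
            (fun v => Matrix.diagonal v * R v - R v * Matrix.diagonal v) u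
          + (((Matrix.diagonal u * R u - R u * Matrix.diagonal u) + D)
              * (E i * R u - R u * E i)
            - (E i * R u - R u * E i)
              * ((Matrix.diagonal u * R u - R u * Matrix.diagonal u) + D))) := by
    intro i u hu z hz
    have hZ1 : matrixPderiv i (fun v => A v z) u
        = (z ^ 2)⁻¹ • E i + z⁻¹ • matrixPderiv i
            (fun v => Matrix.diagonal v * R v - R v * Matrix.diagonal v) u := by
      have hfu : (fun v => A v z) = fun v => (z ^ 2)⁻¹ • Matrix.diagonal v
          + z⁻¹ • ((Matrix.diagonal v * R v - R v * Matrix.diagonal v) + D) := by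
        funext v; exact hA v z
      rw [hfu, stmt6_pderivA R D u (hR' u hu) i z, hE]
    have hZ2 : matrixZderiv (fun w => Ω i u w) z = (z ^ 2)⁻¹ • E i := by
      have hfu : (fun w => Ω i u w) = fun w => -(w⁻¹ • E i) - (E i * R u - R u * E i) := by
        funext w; exact hΩ i u w
      rw [hfu, stmt6_zderiv _ _ _ hz]
    have hZ4 : Ω i u z * A u z - A u z * Ω i u z
        = z⁻¹ • ((((Matrix.diagonal u * R u - R u * Matrix.diagonal u) + D)
              * (E i * R u - R u * E i)
            - (E i * R u - R u * E i)
              * ((Matrix.diagonal u * R u - R u * Matrix.diagonal u) + D))) := by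
      rw [hΩ, hA]
      exact stmt6_commAΩ (Matrix.diagonal u)
        ((Matrix.diagonal u * R u - R u * Matrix.diagonal u) + D)
        (E i) (E i * R u - R u * E i) z (hΛE u i)
        (stmt6_key1 (Matrix.diagonal u) (R u) (E i) D (hΛE u i) (hDE i))
    rw [hZ1, hZ2]
    rw [smul_add]
    rw [show ∀ X Y W : Matrix (Fin n) (Fin n) ℂ,
      ((z ^ 2)⁻¹ • E i + z⁻¹ • X) - (z ^ 2)⁻¹ • E i + Y - W
        = z⁻¹ • X + (Y - W) from fun X Y W => by abel]
    rw [hZ4]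
  -- reduction of the second zero-curvature equation
  have key2 : ∀ i j : Fin n, ∀ u ∈ U, ∀ z : ℂ, z ≠ 0 →
      matrixPderiv i (fun v => Ω j v z) u - matrixPderiv j (fun v => Ω i v z) u
        + Ω i u z * Ω j u z - Ω j u z * Ω i u z
      = -(matrixPderiv i (fun v => E j * R v - R v * E j) u
            - matrixPderiv j (fun v => E i * R v - R v * E i) u)
        + ((E i * R u - R u * E i) * (E j * R u - R u * E j)
          - (E j * R u - R u * E j) * (E i * R u - R u * E i)) := by
    intro i j u hu z hz
    have hZ3 : ∀ k l : Fin n, matrixPderiv k (fun v => Ω l v z) u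
        = -(matrixPderiv k (fun v => E l * R v - R v * E l) u) := by
      intro k l
      have hfu : (fun v => Ω l v z)
          = fun v => -(z⁻¹ • Matrix.single l l (1:ℂ))
            - (Matrix.single l l (1:ℂ) * R v
              - R v * Matrix.single l l (1:ℂ)) := by
        funext v; rw [hΩ l v z, hE l]
      have hfu2 : (fun v => E l * R v - R v * E l)
          = fun v => Matrix.single l l (1:ℂ) * R v
              - R v * Matrix.single l l (1:ℂ) := by
        funext v; rw [hE l]
      rw [hfu, hfu2, stmt6_pderivΩ R u (hR' u hu) k l z]
    have hZ5 : Ω i u z * Ω j u z - Ω j u z * Ω i u z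
        = (E i * R u - R u * E i) * (E j * R u - R u * E j)
          - (E j * R u - R u * E j) * (E i * R u - R u * E i) := by
      rw [hΩ i u z, hΩ j u z]
      exact stmt6_commΩΩ (E i) (E j) (E i * R u - R u * E i) (E j * R u - R u * E j) z
        (hEE i j) (stmt6_key2 (R u) (E i) (E j) (hEE i j))
    rw [hZ3 i j, hZ3 j i]
    have habel : ∀ X Y M1 M2 : Matrix (Fin n) (Fin n) ℂ,
        -X - -Y + M1 - M2 = -(X - Y) + (M1 - M2) := fun X Y M1 M2 => by abel
    rw [habel, hZ5]
  constructor
  · rintro ⟨h1, h2⟩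
    constructor
    · intro i u hu
      have h := h1 i u hu 1 one_ne_zero
      rw [key1 i u hu 1 one_ne_zero] at h
      simp only [inv_one, one_smul] at h
      exact eq_neg_of_add_eq_zero_left h
    · intro i j u hu
      have h := h2 i j u hu 1 one_ne_zero
      rw [key2 i j u hu 1 one_ne_zero] at h
      have h' := neg_eq_of_add_eq_zero_left h
      rw [← neg_add_eq_zero] at h
      linear_combination (norm := abel) h
  · rintro ⟨g1, g2⟩
    constructor
    · intro i u hu z hz
      rw [key1 i u hu z hz, g1 i u hu]
      simp
    · intro i j u hu z hz
      rw [key2 i j u hu z hz, g2 i j u hu]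
      simp
end
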